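/- Rewriting evaluates closed formulas: if the DeMorgan formula t contains no variables, then t →*_{R_B} 1 if eval t = true and t →*_{R_B} ¬1 if eval t = false, and the constants 1 and ¬1 are in R_B-normal form; hence normalizing a variable-free formula with R_B computes its Boolean value. -/

import Mathlib

/-- DeMorgan formulas: variables, constants 0 and 1, negation, conjunction, disjunction. -/
inductive Fm : Type
  | var : ℕ → Fm
  | zero : Fm
  | one : Fm
  | not : Fm → Fm
  | and : Fm → Fm → Fm
  | or : Fm → Fm → Fm
deriving DecidableEq

/-- Evaluation of a DeMorgan formula under an assignment. -/
def Fm.eval (σ : ℕ → Bool) : Fm → Bool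
  | .var n => σ n
  | .zero => false
  | .one => true
  | .not t => !(t.eval σ)
  | .and t u => t.eval σ && u.eval σ
  | .or t u => t.eval σ || u.eval σ

/-- The root rewrite rules of the term rewriting system `R_B`
(the rule variable `g` stands for an arbitrary formula). -/
inductive RB : Fm → Fm → Prop
  | zero_def : RB .zero (.not .one)
  | not_not (g : Fm) : RB (.not (.not g)) g
  | and_idem (g : Fm) : RB (.and g g) g
  | or_idem (g : Fm) : RB (.or g g) g
  | and_notone_r (g : Fm) : RB (.and g (.not .one)) (.not .one)
  | and_notone_l (g : Fm) : RB (.and (.not .one) g) (.not .one)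
  | or_one_r (g : Fm) : RB (.or g .one) .one
  | or_one_l (g : Fm) : RB (.or .one g) .one
  | and_one_r (g : Fm) : RB (.and g .one) g
  | and_one_l (g : Fm) : RB (.and .one g) g
  | or_notone_r (g : Fm) : RB (.or g (.not .one)) g
  | or_notone_l (g : Fm) : RB (.or (.not .one) g) g
  | and_not_self_r (g : Fm) : RB (.and g (.not g)) (.not .one)
  | and_not_self_l (g : Fm) : RB (.and (.not g) g) (.not .one)
  | or_not_self_r (g : Fm) : RB (.or g (.not g)) .one
  | or_not_self_l (g : Fm) : RB (.or (.not g) g) .one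

/-- One rewrite step of `R_B`: a rule applied to a single subterm. -/
inductive Step : Fm → Fm → Prop
  | rule {t u : Fm} : RB t u → Step t u
  | not {t u : Fm} : Step t u → Step (.not t) (.not u)
  | and_left {t t' u : Fm} : Step t t' → Step (.and t u) (.and t' u)
  | and_right {t u u' : Fm} : Step u u' → Step (.and t u) (.and t u')
  | or_left {t t' u : Fm} : Step t t' → Step (.or t u) (.or t' u)
  | or_right {t u u' : Fm} : Step u u' → Step (.or t u) (.or t u')

/-- The reflexive transitive closure of one-step rewriting. -/
def Steps : Fm → Fm → Prop := Relation.ReflTransGen Step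

/-- A formula is in normal form when no rule applies to any of its subterms. -/
def NormalForm (t : Fm) : Prop := ¬ ∃ u, Step t u

/-- A formula is variable-free (closed) when it contains no variables. -/
def Fm.VarFree : Fm → Prop
  | .var _ => False
  | .zero => True
  | .one => True
  | .not t => t.VarFree
  | .and t u => t.VarFree ∧ u.VarFree
  | .or t u => t.VarFree ∧ u.VarFree

lemma Steps.not' {t u : Fm} (h : Steps t u) : Steps (.not t) (.not u) :=
  Relation.ReflTransGen.lift Fm.not (fun _ _ => Step.not) _ _ h

lemma Steps.and' {t t' u u' : Fm} (h : Steps t t') (h' : Steps u u') :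
    Steps (.and t u) (.and t' u') := by
  refine Relation.ReflTransGen.trans
    (Relation.ReflTransGen.lift (fun x => Fm.and x u) (fun _ _ => Step.and_left) _ _ h) ?_
  exact Relation.ReflTransGen.lift (fun x => Fm.and t' x) (fun _ _ => Step.and_right) _ _ h'

lemma Steps.or' {t t' u u' : Fm} (h : Steps t t') (h' : Steps u u') :
    Steps (.or t u) (.or t' u') := by
  refine Relation.ReflTransGen.trans
    (Relation.ReflTransGen.lift (fun x => Fm.or x u) (fun _ _ => Step.or_left) _ _ h) ?_
  exact Relation.ReflTransGen.lift (fun x => Fm.or t' x) (fun _ _ => Step.or_right) _ _ h'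

lemma steps_of_rule {t u : Fm} (h : RB t u) : Steps t u :=
  Relation.ReflTransGen.single (Step.rule h)

lemma closed_eval (t : Fm) (ht : t.VarFree) (σ : ℕ → Bool) :
    (t.eval σ = true → Steps t .one) ∧ (t.eval σ = false → Steps t (.not .one)) := by
  induction t with
  | var n => exact absurd ht id
  | zero =>
    refine ⟨fun h => by simp [Fm.eval] at h, fun _ => steps_of_rule RB.zero_def⟩
  | one =>
    refine ⟨fun _ => Relation.ReflTransGen.refl, fun h => by simp [Fm.eval] at h⟩
  | not s ih =>
    obtain ⟨h1, h2⟩ := ih ht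
    constructor
    · intro h
      simp only [Fm.eval, Bool.not_eq_true'] at h
      exact Relation.ReflTransGen.trans ((h2 h).not')
        (steps_of_rule (RB.not_not _))
    · intro h
      simp only [Fm.eval, Bool.not_eq_false'] at h
      exact (h1 h).not'
  | and s u ihs ihu =>
    obtain ⟨hs1, hs2⟩ := ihs ht.1
    obtain ⟨hu1, hu2⟩ := ihu ht.2
    constructor
    · intro h
      simp only [Fm.eval, Bool.and_eq_true] at h
      exact Relation.ReflTransGen.trans (Steps.and' (hs1 h.1) (hu1 h.2))
        (steps_of_rule (RB.and_idem _))
    · intro h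
      simp only [Fm.eval, Bool.and_eq_false_iff] at h
      rcases h with h | h
      · exact Relation.ReflTransGen.trans (Steps.and' (hs2 h) .refl)
          (steps_of_rule (RB.and_notone_l _))
      · exact Relation.ReflTransGen.trans (Steps.and' .refl (hu2 h))
          (steps_of_rule (RB.and_notone_r _))
  | or s u ihs ihu =>
    obtain ⟨hs1, hs2⟩ := ihs ht.1
    obtain ⟨hu1, hu2⟩ := ihu ht.2
    constructor
    · intro h
      simp only [Fm.eval, Bool.or_eq_true] at h
      rcases h with h | h
      · exact Relation.ReflTransGen.trans (Steps.or' (hs1 h) .refl)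
          (steps_of_rule (RB.or_one_l _))
      · exact Relation.ReflTransGen.trans (Steps.or' .refl (hu1 h))
          (steps_of_rule (RB.or_one_r _))
    · intro h
      simp only [Fm.eval, Bool.or_eq_false_iff] at h
      exact Relation.ReflTransGen.trans (Steps.or' (hs2 h.1) (hu2 h.2))
        (steps_of_rule (RB.or_idem _))

lemma nf_one : NormalForm .one := by
  rintro ⟨u, h⟩
  cases h with
  | rule r => cases r

lemma nf_notone : NormalForm (.not .one) := by
  rintro ⟨u, h⟩
  cases h with
  | rule r => cases r
  | not h' => cases h' with
    | rule r => cases r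

/-- Rewriting evaluates closed formulas: a variable-free formula rewrites
to `1` if it evaluates to `true` and to `¬1` if it evaluates to `false`, and both `1`
and `¬1` are in `R_B`-normal form. -/
theorem RB_evaluates_closed :
    (∀ t : Fm, t.VarFree → ∀ σ : ℕ → Bool,
      (t.eval σ = true → Steps t .one) ∧ (t.eval σ = false → Steps t (.not .one))) ∧
    NormalForm .one ∧ NormalForm (.not .one) := by
  exact ⟨closed_eval, nf_one, nf_notone⟩
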